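/- (Inequality (3.1), algebraic form.) Let β > 0. Suppose Q̊(ψ) ≤ −β ‖ψ‖² for every traceless symmetric bilinear form ψ on E, and Ric(X,X) ≤ −(n−1) β ‖X‖² for every X ∈ E. Then for every p ≥ 2 and every totally traceless symmetric p-multilinear map φ : E^p → ℝ, the Weitzenböck quadratic form satisfies Q_p(φ) ≤ −p(n+p−2) β ‖φ‖² ≤ 0, and Q_p(φ) = 0 only if φ = 0. -/

import Mathlib

open scoped RealInnerProductSpace

private lemma sum_pi_succ {M : Type*} [AddCommMonoid M] {n m : ℕ}
    (f : (Fin (m + 1) → Fin n) → M) :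
    ∑ t : Fin (m + 1) → Fin n, f t = ∑ i : Fin n, ∑ ks : Fin m → Fin n, f (Fin.cons i ks) := by
  rw [← (Fin.consEquiv fun _ => Fin n).sum_comp f, Fintype.sum_prod_type]
  rfl

private lemma sum3_reorder {M α β γ : Type*} [AddCommMonoid M] [Fintype α] [Fintype β] [Fintype γ]
    (h : α → β → γ → M) :
    ∑ i, ∑ j, ∑ k, h i j k = ∑ k, ∑ i, ∑ j, h i j k := by
  calc ∑ i, ∑ j, ∑ k, h i j k
      = ∑ i, ∑ k, ∑ j, h i j k := Finset.sum_congr rfl fun _ _ => Finset.sum_comm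
    _ = ∑ k, ∑ i, ∑ j, h i j k := Finset.sum_comm

private lemma sum4_reorder {M α β γ δ : Type*} [AddCommMonoid M] [Fintype α] [Fintype β]
    [Fintype γ] [Fintype δ] (h : α → β → γ → δ → M) :
    ∑ i, ∑ j, ∑ k, ∑ l, h i j k l = ∑ k, ∑ i, ∑ l, ∑ j, h i j k l := by
  calc ∑ i, ∑ j, ∑ k, ∑ l, h i j k l
      = ∑ i, ∑ k, ∑ j, ∑ l, h i j k l := Finset.sum_congr rfl fun _ _ => Finset.sum_comm
    _ = ∑ i, ∑ k, ∑ l, ∑ j, h i j k l :=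
        Finset.sum_congr rfl fun _ _ => Finset.sum_congr rfl fun _ _ => Finset.sum_comm
    _ = ∑ k, ∑ i, ∑ l, ∑ j, h i j k l := Finset.sum_comm

private lemma sum5_reorder {M α β γ δ ε : Type*} [AddCommMonoid M] [Fintype α] [Fintype β]
    [Fintype γ] [Fintype δ] [Fintype ε] (h : α → β → γ → δ → ε → M) :
    ∑ i, ∑ j, ∑ k, ∑ l, ∑ s, h i j k l s = ∑ s, ∑ i, ∑ j, ∑ k, ∑ l, h i j k l s := by
  calc ∑ i, ∑ j, ∑ k, ∑ l, ∑ s, h i j k l s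
      = ∑ i, ∑ j, ∑ k, ∑ s, ∑ l, h i j k l s :=
        Finset.sum_congr rfl fun _ _ => Finset.sum_congr rfl fun _ _ =>
          Finset.sum_congr rfl fun _ _ => Finset.sum_comm
    _ = ∑ i, ∑ j, ∑ s, ∑ k, ∑ l, h i j k l s :=
        Finset.sum_congr rfl fun _ _ => Finset.sum_congr rfl fun _ _ => Finset.sum_comm
    _ = ∑ i, ∑ s, ∑ j, ∑ k, ∑ l, h i j k l s :=
        Finset.sum_congr rfl fun _ _ => Finset.sum_comm
    _ = ∑ s, ∑ i, ∑ j, ∑ k, ∑ l, h i j k l s := Finset.sum_comm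

private lemma upd1' {E : Type*} [AddCommGroup E] [Module ℝ E] {p : ℕ}
    (a x : E) (w : Fin p → E) (z : E) :
    Function.update (Fin.cons a (Fin.cons x w) : Fin (p + 2) → E) 1 z
      = Fin.cons a (Fin.cons z w) := by
  rw [← Fin.succ_zero_eq_one, ← Fin.cons_update, Fin.update_cons_zero]

/-- The bilinear form `ψ(X,Y) = φ(X, Y, w)` obtained by freezing the last `p` slots. -/
noncomputable def psiAux {E : Type*} [NormedAddCommGroup E] [InnerProductSpace ℝ E] {p : ℕ}
    (φ : MultilinearMap ℝ (fun _ : Fin (p + 2) => E) ℝ) (w : Fin p → E) :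
    E →ₗ[ℝ] E →ₗ[ℝ] ℝ :=
  LinearMap.mk₂ ℝ (fun X Y => φ (Fin.cons X (Fin.cons Y w)))
    (fun x x' y => by
      simpa [Fin.update_cons_zero] using φ.map_update_add (Fin.cons x (Fin.cons y w)) 0 x x')
    (fun c x y => by
      simpa [Fin.update_cons_zero] using φ.map_update_smul (Fin.cons x (Fin.cons y w)) 0 c x)
    (fun x y y' => by
      simpa [upd1'] using φ.map_update_add (Fin.cons x (Fin.cons y w)) 1 y y')
    (fun c x y => by
      simpa [upd1'] using φ.map_update_smul (Fin.cons x (Fin.cons y w)) 1 c y)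

theorem psiAux_apply {E : Type*} [NormedAddCommGroup E] [InnerProductSpace ℝ E] {p : ℕ}
    (φ : MultilinearMap ℝ (fun _ : Fin (p + 2) => E) ℝ) (w : Fin p → E) (X Y : E) :
    psiAux φ w X Y = φ (Fin.cons X (Fin.cons Y w)) := rfl

private lemma cons_comp_swap {E : Type*} [AddCommGroup E] {p : ℕ} (X Y : E) (w : Fin p → E) :
    (Fin.cons X (Fin.cons Y w) : Fin (p + 2) → E) ∘ (Equiv.swap 0 1)
      = Fin.cons Y (Fin.cons X w) := by
  funext i
  refine Fin.cases ?_ (fun j => ?_) i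
  · simp [Equiv.swap_apply_left, Fin.succ_zero_eq_one]
  · refine Fin.cases ?_ (fun k => ?_) j
    · simp [Fin.succ_zero_eq_one, Equiv.swap_apply_right]
    · have h0 : (k.succ.succ : Fin (p + 2)) ≠ 0 := by simp [Fin.ext_iff]
      have h1 : (k.succ.succ : Fin (p + 2)) ≠ 1 := by simp [Fin.ext_iff]
      simp [Equiv.swap_apply_of_ne_of_ne h0 h1, Fin.cons_succ]

private lemma ric_expand {E : Type*} [NormedAddCommGroup E] [InnerProductSpace ℝ E] {n : ℕ}
    (R : E →ₗ[ℝ] E →ₗ[ℝ] E →ₗ[ℝ] E →ₗ[ℝ] ℝ) (e : Fin n → E) (a : Fin n → ℝ) :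
    ∑ m, R (e m) (∑ i, a i • e i) (e m) (∑ j, a j • e j)
      = ∑ i, ∑ j, (∑ m, R (e m) (e i) (e m) (e j)) * a i * a j := by
  simp only [map_sum, map_smul, LinearMap.sum_apply, LinearMap.smul_apply, smul_eq_mul,
    Finset.mul_sum, Finset.sum_mul]
  rw [Finset.sum_comm]
  conv_rhs => rw [Finset.sum_comm]
  refine Finset.sum_congr rfl fun y _ => ?_
  rw [Finset.sum_comm]
  refine Finset.sum_congr rfl fun i _ => ?_
  exact Finset.sum_congr rfl fun m _ => by ring

private lemma norm_sq_sum {E : Type*} [NormedAddCommGroup E] [InnerProductSpace ℝ E] {n : ℕ}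
    (e : OrthonormalBasis (Fin n) ℝ E) (a : Fin n → ℝ) :
    ‖∑ i, a i • e i‖ ^ 2 = ∑ i, a i ^ 2 := by
  rw [← real_inner_self_eq_norm_sq, sum_inner]
  simp [inner_sum, sum_inner, real_inner_smul_left, real_inner_smul_right,
    orthonormal_iff_ite.mp e.orthonormal, mul_ite, Finset.sum_ite_eq, sq]

private lemma ric_bound {E : Type*} [NormedAddCommGroup E] [InnerProductSpace ℝ E] {n : ℕ}
    (e : OrthonormalBasis (Fin n) ℝ E) (R : E →ₗ[ℝ] E →ₗ[ℝ] E →ₗ[ℝ] E →ₗ[ℝ] ℝ) (β : ℝ)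
    (hRic : ∀ X : E, (∑ m, R (e m) X (e m) X) ≤ -(((n : ℝ) - 1) * β) * ‖X‖ ^ 2)
    (a : Fin n → ℝ) :
    ∑ i, ∑ j, (∑ m, R (e m) (e i) (e m) (e j)) * a i * a j
      ≤ -(((n : ℝ) - 1) * β) * ∑ i, a i ^ 2 := by
  calc ∑ i, ∑ j, (∑ m, R (e m) (e i) (e m) (e j)) * a i * a j
      = ∑ m, R (e m) (∑ i, a i • e i) (e m) (∑ j, a j • e j) :=
        (ric_expand R (fun i => e i) a).symm
    _ ≤ -(((n : ℝ) - 1) * β) * ‖∑ i, a i • e i‖ ^ 2 := hRic _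
    _ = -(((n : ℝ) - 1) * β) * ∑ i, a i ^ 2 := by rw [norm_sq_sum]

noncomputable def weitzenbockQ
    {E : Type*} [NormedAddCommGroup E] [InnerProductSpace ℝ E]
    {n : ℕ} (e : OrthonormalBasis (Fin n) ℝ E)
    (R : E →ₗ[ℝ] E →ₗ[ℝ] E →ₗ[ℝ] E →ₗ[ℝ] ℝ)
    (p : ℕ) (φ : MultilinearMap ℝ (fun _ : Fin (p + 2) => E) ℝ) : ℝ :=
  ((p : ℝ) + 2) *
      (∑ i, ∑ j, ∑ ks : Fin (p + 1) → Fin n,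
        (∑ m, R (e m) (e i) (e m) (e j)) *
          φ (Fin.cons (e i) (fun m => e (ks m))) *
          φ (Fin.cons (e j) (fun m => e (ks m))))
    - ((p : ℝ) + 2) * (((p : ℝ) + 2) - 1) *
      (∑ i, ∑ j, ∑ k, ∑ l, ∑ ks : Fin p → Fin n,
        R (e i) (e j) (e k) (e l) *
          φ (Fin.cons (e i) (Fin.cons (e k) (fun m => e (ks m)))) *
          φ (Fin.cons (e j) (Fin.cons (e l) (fun m => e (ks m)))))

/-- **inequality (3.1), algebraic form.** Let `β > 0`.  If
`Q̊(ψ) ≤ −β ‖ψ‖²` for every traceless symmetric bilinear form `ψ` and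
`Ric(X,X) ≤ −(n−1) β ‖X‖²` for every `X`, then for every `p ≥ 2` (written `p + 2`)
and every totally traceless symmetric `p`-multilinear map `φ`,
`Q_p(φ) ≤ −p(n+p−2) β ‖φ‖² ≤ 0`, and `Q_p(φ) = 0` only if `φ = 0`. -/
theorem stmt_14
    {E : Type*} [NormedAddCommGroup E] [InnerProductSpace ℝ E]
    {n : ℕ} (hn : 2 ≤ n) (e : OrthonormalBasis (Fin n) ℝ E)
    (R : E →ₗ[ℝ] E →ₗ[ℝ] E →ₗ[ℝ] E →ₗ[ℝ] ℝ)
    (hR1 : ∀ X Y Z W : E, R X Y Z W = - R Y X Z W)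
    (hR2 : ∀ X Y Z W : E, R X Y Z W = - R X Y W Z)
    (hR3 : ∀ X Y Z W : E, R X Y Z W = R Z W X Y)
    (hR4 : ∀ X Y Z W : E, R X Y Z W + R Y Z X W + R Z X Y W = 0)
    (β : ℝ) (hβ : 0 < β)
    (hQ : ∀ ψ : E →ₗ[ℝ] E →ₗ[ℝ] ℝ, (∀ X Y : E, ψ X Y = ψ Y X) →
      (∑ i, ψ (e i) (e i)) = 0 →
      (∑ i, ∑ j, ∑ k, ∑ l, R (e i) (e k) (e l) (e j) * ψ (e k) (e l) * ψ (e i) (e j)) ≤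
        -β * (∑ i, ∑ j, (ψ (e i) (e j)) ^ 2))
    (hRic : ∀ X : E, (∑ m, R (e m) X (e m) X) ≤ -(((n : ℝ) - 1) * β) * ‖X‖ ^ 2)
    (p : ℕ)
    (φ : MultilinearMap ℝ (fun _ : Fin (p + 2) => E) ℝ)
    (hφsymm : ∀ σ : Equiv.Perm (Fin (p + 2)), ∀ v : Fin (p + 2) → E, φ (v ∘ σ) = φ v)
    (hφtr : ∀ v : Fin p → E, (∑ i, φ (Fin.cons (e i) (Fin.cons (e i) v))) = 0) :
    weitzenbockQ e R p φ ≤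
      -(((p : ℝ) + 2) * ((n : ℝ) + ((p : ℝ) + 2) - 2) * β) *
        (∑ t : Fin (p + 2) → Fin n, (φ (fun m => e (t m))) ^ 2) ∧
    -(((p : ℝ) + 2) * ((n : ℝ) + ((p : ℝ) + 2) - 2) * β) *
        (∑ t : Fin (p + 2) → Fin n, (φ (fun m => e (t m))) ^ 2) ≤ 0 ∧
    (weitzenbockQ e R p φ = 0 → φ = 0) := by
  classical
  have hp0 : (0 : ℝ) ≤ (p : ℝ) := Nat.cast_nonneg p
  have hn2 : (2 : ℝ) ≤ (n : ℝ) := by exact_mod_cast hn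
  have hT0 : (0 : ℝ) ≤ ∑ t : Fin (p + 2) → Fin n, (φ (fun m => e (t m))) ^ 2 :=
    Finset.sum_nonneg fun _ _ => sq_nonneg _
  have key1 : ∀ (i : Fin n) (ks : Fin (p + 1) → Fin n),
      (fun m => e ((Fin.cons i ks : Fin (p + 2) → Fin n) m))
        = Fin.cons (e i) (fun m => e (ks m)) := by
    intro i ks
    funext m
    refine Fin.cases ?_ (fun j => ?_) m <;> simp
  have key2 : ∀ (i k : Fin n) (ks : Fin p → Fin n),
      (fun m => e ((Fin.cons i (Fin.cons k ks) : Fin (p + 2) → Fin n) m))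
        = Fin.cons (e i) (Fin.cons (e k) (fun m => e (ks m))) := by
    intro i k ks
    funext m
    refine Fin.cases ?_ (fun j => ?_) m
    · simp
    · refine Fin.cases ?_ (fun l => ?_) j <;> simp
  -- Ricci part
  have hA : (∑ i, ∑ j, ∑ ks : Fin (p + 1) → Fin n,
        (∑ m, R (e m) (e i) (e m) (e j)) *
          φ (Fin.cons (e i) (fun m => e (ks m))) *
          φ (Fin.cons (e j) (fun m => e (ks m))))
      ≤ -(((n : ℝ) - 1) * β) * ∑ t : Fin (p + 2) → Fin n, (φ (fun m => e (t m))) ^ 2 := by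
    rw [sum3_reorder]
    have hsplit : (∑ t : Fin (p + 2) → Fin n, (φ (fun m => e (t m))) ^ 2)
        = ∑ ks : Fin (p + 1) → Fin n, ∑ i, (φ (Fin.cons (e i) (fun m => e (ks m)))) ^ 2 := by
      rw [sum_pi_succ (fun t => (φ (fun m => e (t m))) ^ 2)]
      simp only [key1]
      exact Finset.sum_comm
    rw [hsplit, Finset.mul_sum]
    refine Finset.sum_le_sum fun ks _ => ?_
    exact ric_bound e R β hRic (fun i => φ (Fin.cons (e i) (fun m => e (ks m))))
  -- curvature (second kind) part
  have hB : β * (∑ t : Fin (p + 2) → Fin n, (φ (fun m => e (t m))) ^ 2)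
      ≤ ∑ i, ∑ j, ∑ k, ∑ l, ∑ ks : Fin p → Fin n,
          R (e i) (e j) (e k) (e l) *
            φ (Fin.cons (e i) (Fin.cons (e k) (fun m => e (ks m)))) *
            φ (Fin.cons (e j) (Fin.cons (e l) (fun m => e (ks m)))) := by
    rw [sum5_reorder]
    have hsplit : (∑ t : Fin (p + 2) → Fin n, (φ (fun m => e (t m))) ^ 2)
        = ∑ ks : Fin p → Fin n, ∑ i, ∑ j,
            (φ (Fin.cons (e i) (Fin.cons (e j) (fun m => e (ks m))))) ^ 2 := by
      calc (∑ t : Fin (p + 2) → Fin n, (φ (fun m => e (t m))) ^ 2)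
          = ∑ i : Fin n, ∑ t' : Fin (p + 1) → Fin n,
              (φ (fun m => e ((Fin.cons i t' : Fin (p + 2) → Fin n) m))) ^ 2 :=
            sum_pi_succ _
        _ = ∑ i : Fin n, ∑ j : Fin n, ∑ ks : Fin p → Fin n,
              (φ (fun m => e ((Fin.cons i (Fin.cons j ks) : Fin (p + 2) → Fin n) m))) ^ 2 :=
            Finset.sum_congr rfl fun i _ => sum_pi_succ _
        _ = ∑ ks : Fin p → Fin n, ∑ i : Fin n, ∑ j : Fin n,
              (φ (fun m => e ((Fin.cons i (Fin.cons j ks) : Fin (p + 2) → Fin n) m))) ^ 2 :=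
            sum3_reorder _
        _ = _ := by simp only [key2]
    rw [hsplit, Finset.mul_sum]
    refine Finset.sum_le_sum fun ks _ => ?_
    set w : Fin p → E := fun m => e (ks m) with hw
    set ψ := psiAux φ w with hψ
    have hsym : ∀ X Y : E, ψ X Y = ψ Y X := by
      intro X Y
      show φ (Fin.cons X (Fin.cons Y w)) = φ (Fin.cons Y (Fin.cons X w))
      rw [← cons_comp_swap X Y w]
      exact (hφsymm (Equiv.swap 0 1) _).symm
    have htr : (∑ i, ψ (e i) (e i)) = 0 := hφtr w
    have hq := hQ ψ hsym htr
    have hid : (∑ i, ∑ j, ∑ k, ∑ l, R (e i) (e k) (e l) (e j) * ψ (e k) (e l) * ψ (e i) (e j))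
        = -(∑ i, ∑ j, ∑ k, ∑ l, R (e i) (e j) (e k) (e l) * ψ (e i) (e k) * ψ (e j) (e l)) := by
      rw [show (∑ i, ∑ j, ∑ k, ∑ l, R (e i) (e j) (e k) (e l) * ψ (e i) (e k) * ψ (e j) (e l))
          = ∑ i, ∑ j, ∑ k, ∑ l, R (e k) (e i) (e l) (e j) * ψ (e k) (e l) * ψ (e i) (e j) from
        (sum4_reorder fun i j k l => R (e k) (e i) (e l) (e j) * ψ (e k) (e l) * ψ (e i) (e j)).symm]
      rw [← Finset.sum_neg_distrib]
      refine Finset.sum_congr rfl fun i _ => ?_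
      rw [← Finset.sum_neg_distrib]
      refine Finset.sum_congr rfl fun j _ => ?_
      rw [← Finset.sum_neg_distrib]
      refine Finset.sum_congr rfl fun k _ => ?_
      rw [← Finset.sum_neg_distrib]
      refine Finset.sum_congr rfl fun l _ => ?_
      rw [hR1 (e i) (e k) (e l) (e j)]
      ring
    rw [hid] at hq
    have hfin : β * (∑ i, ∑ j, ψ (e i) (e j) ^ 2)
        ≤ ∑ i, ∑ j, ∑ k, ∑ l, R (e i) (e j) (e k) (e l) * ψ (e i) (e k) * ψ (e j) (e l) := by
      linarith
    exact hfin
  -- assemble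
  have hmain : weitzenbockQ e R p φ ≤
      -(((p : ℝ) + 2) * ((n : ℝ) + ((p : ℝ) + 2) - 2) * β) *
        (∑ t : Fin (p + 2) → Fin n, (φ (fun m => e (t m))) ^ 2) := by
    unfold weitzenbockQ
    have c1 : (0 : ℝ) ≤ (p : ℝ) + 2 := by linarith
    have c2 : (0 : ℝ) ≤ ((p : ℝ) + 2) * (((p : ℝ) + 2) - 1) := by nlinarith
    have h1 := mul_le_mul_of_nonneg_left hA c1
    have h2 := mul_le_mul_of_nonneg_left hB c2
    nlinarith [h1, h2]
  have hcpos : (0 : ℝ) < ((p : ℝ) + 2) * ((n : ℝ) + ((p : ℝ) + 2) - 2) * β := by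
    have : (0 : ℝ) < (n : ℝ) + ((p : ℝ) + 2) - 2 := by linarith
    have : (0 : ℝ) < ((p : ℝ) + 2) * ((n : ℝ) + ((p : ℝ) + 2) - 2) := by nlinarith
    nlinarith
  refine ⟨hmain, ?_, ?_⟩
  · nlinarith [mul_nonneg hcpos.le hT0]
  · intro h0
    rw [h0] at hmain
    have hT : (∑ t : Fin (p + 2) → Fin n, (φ (fun m => e (t m))) ^ 2) = 0 := by
      nlinarith
    have hzero : ∀ t : Fin (p + 2) → Fin n, φ (fun m => e (t m)) = 0 := by
      intro t
      have h := (Finset.sum_eq_zero_iff_of_nonneg (fun t _ => sq_nonneg _)).mp hT t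
        (Finset.mem_univ t)
      exact pow_eq_zero_iff (two_ne_zero) |>.mp h
    refine Module.Basis.ext_multilinear (fun _ => e.toBasis) fun v => ?_
    simp only [OrthonormalBasis.coe_toBasis, MultilinearMap.zero_apply]
    exact hzero v
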